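/- Fix intermediate dominoes (x_1, y_1), …, (x_n, y_n) and end domino (x_{n+1}, y_{n+1}) over {a, b}, and let R1 be the string rewriting system constructed from them as in the context. Then for every symbol d ∈ Σ̂ and all strings Z1, Z2 over Σ̂: Z1·d ↓_{R1} Z2·d if and only if Z1 ↓_{R1} Z2. In particular, if Z1 and Z2 are irreducible and Z1·d ↓_{R1} Z2·d, then Z1 = Z2. -/

import Mathlib

/- Strings over an alphabet `σ` are modelled as `List σ`; a finite string
rewriting system is a finite list of rules `(l, r)`. -/

namespace SRS

variable {σ : Type*}

/-- One-step rewrite relation: `u →_R v`. -/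
def Step (R : List (List σ × List σ)) (u v : List σ) : Prop :=
  ∃ x y l r, (l, r) ∈ R ∧ u = x ++ l ++ y ∧ v = x ++ r ++ y

/-- `u →*_R v`: reflexive-transitive closure. -/
def Reduces (R : List (List σ × List σ)) : List σ → List σ → Prop :=
  Relation.ReflTransGen (Step R)

/-- `u ↔*_R v`: reflexive-symmetric-transitive closure. -/
def Equiv (R : List (List σ × List σ)) : List σ → List σ → Prop :=
  Relation.EqvGen (Step R)

/-- `u ↓_R v`: joinability, i.e. a common reduct exists. -/
def Joins (R : List (List σ × List σ)) : List σ → List σ → Prop :=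
  Relation.Join (Reduces R)

/-- A string is irreducible if no rule applies to it. -/
def Irreducible (R : List (List σ × List σ)) (u : List σ) : Prop :=
  ∀ v, ¬ Step R u v

/-- `u →!_R v`: `v` is an `R`-normal form of `u`. -/
def NormalizesTo (R : List (List σ × List σ)) (u v : List σ) : Prop :=
  Reduces R u v ∧ Irreducible R v

/-- Terminating: no infinite chain of rewrite steps. -/
def Terminating (R : List (List σ × List σ)) : Prop :=
  ¬ ∃ f : ℕ → List σ, ∀ n, Step R (f n) (f (n + 1))

def Confluent (R : List (List σ × List σ)) : Prop :=
  ∀ t s₁ s₂, Reduces R t s₁ → Reduces R t s₂ →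
    ∃ t', Reduces R s₁ t' ∧ Reduces R s₂ t'

def Convergent (R : List (List σ × List σ)) : Prop :=
  Terminating R ∧ Confluent R

/-- Dwindling: every right-hand side is a proper prefix of its left-hand side. -/
def Dwindling (R : List (List σ × List σ)) : Prop :=
  ∀ p ∈ R, p.2 <+: p.1 ∧ p.2 ≠ p.1

/-- Monadic: length-reducing with right-hand sides of length at most 1. -/
def Monadic (R : List (List σ × List σ)) : Prop :=
  ∀ p ∈ R, p.2.length < p.1.length ∧ p.2.length ≤ 1

/-- `MP α`: normal forms of `p ++ s` with `p` a prefix of `α` and `s` a single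
symbol or the empty string. -/
def MP (R : List (List σ × List σ)) (α : List σ) : Set (List σ) :=
  { γ | ∃ p s, p <+: α ∧ s.length ≤ 1 ∧ NormalizesTo R (p ++ s) γ }

end SRS

/-! ### The alphabet `Σ̂` and rewriting system `R₁`

Letters of `{a, b}` are modelled by `Bool` (`true ↦ a`, `false ↦ b`).  The
intermediate dominoes `(x₁, y₁), …, (x_n, y_n)` and the end domino
`(x_{n+1}, y_{n+1})` are given by `x y : Fin (n + 1) → List Bool`, where index
`j : Fin (n + 1)` stands for the domino with index `j + 1`; thus `j` with
`(j : ℕ) < n` are the intermediate dominoes and `j = Fin.last n` is the end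
domino.  Correspondingly `Alph.c j` denotes the symbol `c_{j+1}`. -/

/-- The alphabet `Σ̂ = {a, b} ∪ {c₁, …, c_{n+1}} ∪ {¢₁, ¢₂, $, #₁, #₂}`. -/
inductive Alph (n : ℕ) : Type
  | a | b
  | c (j : Fin (n + 1))
  | cent1 | cent2 | dollar | hash1 | hash2

/-- Embedding of strings over `{a, b}` into strings over `Σ̂`. -/
def emb {n : ℕ} (w : List Bool) : List (Alph n) :=
  w.map fun s => if s then Alph.a else Alph.b

/-- The string rewriting system `R₁`:
`¢₁·cᵢ → xᵢ·¢₁`, `¢₂·cᵢ → yᵢ·¢₂` for `1 ≤ i ≤ n`;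
`¢₁·c_{n+1} → #₁·x_{n+1}·$`, `¢₂·c_{n+1} → #₂·y_{n+1}·$`;
`s·#₁ → #₁·s`, `s·#₂ → #₂·s` for `s ∈ {a, b}`. -/
def R1 (n : ℕ) (x y : Fin (n + 1) → List Bool) :
    List (List (Alph n) × List (Alph n)) :=
  ((List.finRange (n + 1)).flatMap fun (j : Fin (n + 1)) =>
    if (j : ℕ) < n then
      [ ([Alph.cent1, Alph.c j], emb (x j) ++ [Alph.cent1]),
        ([Alph.cent2, Alph.c j], emb (y j) ++ [Alph.cent2]) ]
    else
      [ ([Alph.cent1, Alph.c j], [Alph.hash1] ++ emb (x j) ++ [Alph.dollar]),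
        ([Alph.cent2, Alph.c j], [Alph.hash2] ++ emb (y j) ++ [Alph.dollar]) ])
  ++ ([true, false].flatMap fun s =>
      [ ([(if s then Alph.a else Alph.b), Alph.hash1],
         [Alph.hash1, (if s then Alph.a else Alph.b)]),
        ([(if s then Alph.a else Alph.b), Alph.hash2],
         [Alph.hash2, (if s then Alph.a else Alph.b)]) ])

/-- The GPCP instance with start domino `(x₀, y₀)`, intermediate dominoes
`(x_j, y_j)` (`1 ≤ j ≤ n`) and end domino `(x_{n+1}, y_{n+1})` has a solution. -/
def GPCPSol (n : ℕ) (x₀ y₀ : List Bool) (x y : Fin (n + 1) → List Bool) : Prop :=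
  ∃ l : List (Fin (n + 1)), (∀ j ∈ l, (j : ℕ) < n) ∧
    x₀ ++ l.flatMap x ++ x (Fin.last n) = y₀ ++ l.flatMap y ++ y (Fin.last n)

/-! ### Auxiliary lemmas -/

namespace SRS

variable {σ : Type*} {R : List (List σ × List σ)}

theorem Step.append_right {u v : List σ} (h : Step R u v) (w : List σ) :
    Step R (u ++ w) (v ++ w) := by
  obtain ⟨p, q, l, r, hm, hu, hv⟩ := h
  exact ⟨p, q ++ w, l, r, hm, by simp [hu], by simp [hv]⟩

theorem Reduces.append_right {u v : List σ} (h : Reduces R u v) (w : List σ) :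
    Reduces R (u ++ w) (v ++ w) := by
  induction h with
  | refl => exact Relation.ReflTransGen.refl
  | tail _ st ih => exact ih.tail (st.append_right w)

theorem Joins.append_right {u v : List σ} (h : Joins R u v) (w : List σ) :
    Joins R (u ++ w) (v ++ w) := by
  obtain ⟨t, h1, h2⟩ := h
  exact ⟨t ++ w, h1.append_right w, h2.append_right w⟩

theorem Irreducible.reduces_eq {u v : List σ} (hu : Irreducible R u) (h : Reduces R u v) :
    v = u := by
  induction h with
  | refl => rfl
  | tail _ st ih => rw [ih] at st; exact absurd st (hu _)

theorem Joins.eq_of_irreducible {u v : List σ} (hu : Irreducible R u) (hv : Irreducible R v)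
    (h : Joins R u v) : u = v := by
  obtain ⟨t, h1, h2⟩ := h
  exact (hu.reduces_eq h1).symm.trans (hv.reduces_eq h2)

end SRS

section Aux

variable {n : ℕ} {x y : Fin (n + 1) → List Bool}

/-- A symbol that never occurs as the second (final) symbol of a left-hand side. -/
def Inert (s : Alph n) : Prop :=
  (∀ j, s ≠ Alph.c j) ∧ s ≠ Alph.hash1 ∧ s ≠ Alph.hash2

def IsHash (s : Alph n) : Prop := s = Alph.hash1 ∨ s = Alph.hash2

lemma mem_R1_iff {l r : List (Alph n)} :
    (l, r) ∈ R1 n x y ↔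
      (∃ j : Fin (n + 1), ((j : ℕ) < n ∧
        ((l, r) = ([Alph.cent1, Alph.c j], emb (x j) ++ [Alph.cent1]) ∨
         (l, r) = ([Alph.cent2, Alph.c j], emb (y j) ++ [Alph.cent2]))) ∨
        (¬ (j : ℕ) < n ∧
        ((l, r) = ([Alph.cent1, Alph.c j], [Alph.hash1] ++ emb (x j) ++ [Alph.dollar]) ∨
         (l, r) = ([Alph.cent2, Alph.c j], [Alph.hash2] ++ emb (y j) ++ [Alph.dollar])))) ∨
      (∃ s : Bool,
        (l, r) = ([if s then Alph.a else Alph.b, Alph.hash1],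
                  [Alph.hash1, if s then Alph.a else Alph.b]) ∨
        (l, r) = ([if s then Alph.a else Alph.b, Alph.hash2],
                  [Alph.hash2, if s then Alph.a else Alph.b])) := by
  constructor
  · intro h
    simp only [R1, List.mem_append, List.mem_flatMap, List.mem_finRange, true_and,
      List.mem_cons, List.not_mem_nil, or_false] at h
    rcases h with ⟨j, hj⟩ | ⟨s, hs, h⟩
    · left
      refine ⟨j, ?_⟩
      by_cases hjn : (j : ℕ) < n
      · simp only [hjn, if_true, List.mem_cons, List.not_mem_nil, or_false] at hj
        exact Or.inl ⟨hjn, hj⟩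
      · simp only [hjn, if_false, List.mem_cons, List.not_mem_nil, or_false] at hj
        exact Or.inr ⟨hjn, hj⟩
    · right; exact ⟨s, h⟩
  · intro h
    simp only [R1, List.mem_append, List.mem_flatMap, List.mem_finRange, true_and,
      List.mem_cons, List.not_mem_nil, or_false]
    rcases h with ⟨j, ⟨hjn, hj | hj⟩ | ⟨hjn, hj | hj⟩⟩ | ⟨s, hs⟩ <;>
      [skip; skip; skip; skip;
        exact Or.inr ⟨s, by cases s <;> simp at hs ⊢ <;> tauto⟩] <;>
      simp only [Prod.mk.injEq] at hj <;>
      exact Or.inl ⟨j, by simp [hjn, hj.1, hj.2]⟩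

lemma R1_shape {l r : List (Alph n)} (h : (l, r) ∈ R1 n x y) :
    ∃ l₀ l₁, l = [l₀, l₁] ∧ ¬ Inert l₁ := by
  rcases mem_R1_iff.1 h with ⟨j, ⟨_, hj | hj⟩ | ⟨_, hj | hj⟩⟩ | ⟨s, hj | hj⟩ <;>
    rw [Prod.mk.injEq] at hj <;>
    [ exact ⟨_, _, hj.1, fun hi => hi.1 j rfl⟩;
      exact ⟨_, _, hj.1, fun hi => hi.1 j rfl⟩;
      exact ⟨_, _, hj.1, fun hi => hi.1 j rfl⟩;
      exact ⟨_, _, hj.1, fun hi => hi.1 j rfl⟩;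
      exact ⟨_, _, hj.1, fun hi => hi.2.1 rfl⟩;
      exact ⟨_, _, hj.1, fun hi => hi.2.2 rfl⟩]

lemma R1_snd_c {p : Alph n} {r : List (Alph n)} {j : Fin (n + 1)}
    (h : ([p, Alph.c j], r) ∈ R1 n x y) :
    ((j : ℕ) < n ∧
      ((p = Alph.cent1 ∧ r = emb (x j) ++ [Alph.cent1]) ∨
       (p = Alph.cent2 ∧ r = emb (y j) ++ [Alph.cent2]))) ∨
    (¬ (j : ℕ) < n ∧
      ((p = Alph.cent1 ∧ r = [Alph.hash1] ++ emb (x j) ++ [Alph.dollar]) ∨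
       (p = Alph.cent2 ∧ r = [Alph.hash2] ++ emb (y j) ++ [Alph.dollar]))) := by
  rcases mem_R1_iff.1 h with ⟨j', ⟨hn, hj | hj⟩ | ⟨hn, hj | hj⟩⟩ | ⟨s, hj | hj⟩ <;>
    simp only [Prod.mk.injEq, List.cons.injEq] at hj
  · obtain ⟨⟨rfl, hc, -⟩, rfl⟩ := hj
    obtain rfl : j = j' := by injection hc
    exact Or.inl ⟨hn, Or.inl ⟨rfl, rfl⟩⟩
  · obtain ⟨⟨rfl, hc, -⟩, rfl⟩ := hj
    obtain rfl : j = j' := by injection hc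
    exact Or.inl ⟨hn, Or.inr ⟨rfl, rfl⟩⟩
  · obtain ⟨⟨rfl, hc, -⟩, rfl⟩ := hj
    obtain rfl : j = j' := by injection hc
    exact Or.inr ⟨hn, Or.inl ⟨rfl, rfl⟩⟩
  · obtain ⟨⟨rfl, hc, -⟩, rfl⟩ := hj
    obtain rfl : j = j' := by injection hc
    exact Or.inr ⟨hn, Or.inr ⟨rfl, rfl⟩⟩
  · exact absurd hj.1.2.1 (by cases s <;> simp)
  · exact absurd hj.1.2.1 (by cases s <;> simp)

lemma R1_snd_hash {p h : Alph n} {r : List (Alph n)} (hh : IsHash h)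
    (hm : ([p, h], r) ∈ R1 n x y) :
    ∃ s : Bool, p = (if s then Alph.a else Alph.b) ∧
      r = [h, if s then Alph.a else Alph.b] := by
  rcases mem_R1_iff.1 hm with ⟨j', ⟨hn, hj | hj⟩ | ⟨hn, hj | hj⟩⟩ | ⟨s, hj | hj⟩ <;>
    simp only [Prod.mk.injEq, List.cons.injEq] at hj
  · rcases hh with rfl | rfl <;> exact absurd hj.1.2.1 (by simp)
  · rcases hh with rfl | rfl <;> exact absurd hj.1.2.1 (by simp)
  · rcases hh with rfl | rfl <;> exact absurd hj.1.2.1 (by simp)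
  · rcases hh with rfl | rfl <;> exact absurd hj.1.2.1 (by simp)
  · obtain ⟨⟨rfl, rfl, -⟩, rfl⟩ := hj
    exact ⟨s, rfl, rfl⟩
  · obtain ⟨⟨rfl, rfl, -⟩, rfl⟩ := hj
    exact ⟨s, rfl, rfl⟩

lemma rule_mem_hash {s : Bool} {h : Alph n} (hh : IsHash h) :
    ([if s then Alph.a else Alph.b, h], [h, if s then Alph.a else Alph.b]) ∈ R1 n x y := by
  apply mem_R1_iff.2
  rcases hh with rfl | rfl
  · exact Or.inr ⟨s, Or.inl rfl⟩
  · exact Or.inr ⟨s, Or.inr rfl⟩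

lemma emb_ab {u : List Bool} : ∀ s ∈ emb (n := n) u, s = Alph.a ∨ s = Alph.b := by
  intro s hs
  simp only [emb, List.mem_map] at hs
  obtain ⟨b, -, rfl⟩ := hs
  cases b <;> simp

lemma inert_of_ab {s : Alph n} (h : s = Alph.a ∨ s = Alph.b) : Inert s := by
  rcases h with rfl | rfl <;> exact ⟨fun j => by simp, by simp, by simp⟩

lemma emb_inert {u : List Bool} : ∀ s ∈ emb (n := n) u, Inert s :=
  fun s hs => inert_of_ab (emb_ab s hs)

lemma not_isHash_of_ab {s : Alph n} (h : s = Alph.a ∨ s = Alph.b) : ¬ IsHash s := by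
  rcases h with rfl | rfl <;> rintro (h' | h') <;> simp at h'

lemma step_last_inv {U V : List (Alph n)} {d : Alph n}
    (h : SRS.Step (R1 n x y) (U ++ [d]) V) :
    (∃ U', SRS.Step (R1 n x y) U U' ∧ V = U' ++ [d]) ∨
    (∃ X p r, ([p, d], r) ∈ R1 n x y ∧ U = X ++ [p] ∧ V = X ++ r) := by
  obtain ⟨px, py, l, r, hm, hu, hv⟩ := h
  obtain ⟨l₀, l₁, rfl, -⟩ := R1_shape hm
  rcases List.eq_nil_or_concat py with rfl | ⟨py', b, rfl⟩
  · right
    have h2 : U ++ [d] = (px ++ [l₀]) ++ [l₁] := by simpa using hu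
    obtain ⟨h3, h4⟩ := List.append_inj' h2 rfl
    obtain rfl : d = l₁ := by simpa using h4
    exact ⟨px, l₀, r, hm, h3, by simpa using hv⟩
  · left
    have h2 : U ++ [d] = (px ++ [l₀, l₁] ++ py') ++ [b] := by
      rw [hu]; simp
    obtain ⟨h3, h4⟩ := List.append_inj' h2 rfl
    obtain rfl : d = b := by simpa using h4
    exact ⟨px ++ r ++ py', ⟨px, py', _, r, hm, h3, rfl⟩, by rw [hv]; simp⟩

lemma step_cancel_suffix {M E V : List (Alph n)} (hE : ∀ s ∈ E, Inert s)
    (h : SRS.Step (R1 n x y) (M ++ E) V) :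
    ∃ M', SRS.Step (R1 n x y) M M' ∧ V = M' ++ E := by
  obtain ⟨px, py, l, r, hm, hu, hv⟩ := h
  obtain ⟨l₀, l₁, rfl, hni⟩ := R1_shape hm
  have s1 : (l₁ :: py) <:+ M ++ E := ⟨px ++ [l₀], by rw [hu]; simp⟩
  have s2 : E <:+ M ++ E := List.suffix_append M E
  rcases List.suffix_or_suffix_of_suffix s1 s2 with hs | hs
  · exact absurd (hE l₁ (hs.subset (List.mem_cons_self))) hni
  · obtain ⟨t, ht⟩ := hs
    cases t with
    | nil =>
      rw [List.nil_append] at ht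
      exact absurd (hE l₁ (ht ▸ List.mem_cons_self)) hni
    | cons t₀ ts =>
      rw [List.cons_append] at ht
      obtain ⟨rfl, h2⟩ := List.cons.injEq .. ▸ ht
      have hM : M = px ++ [l₀, t₀] ++ ts := by
        apply List.append_cancel_right (bs := E)
        rw [hu, ← h2]; simp
      exact ⟨px ++ r ++ ts, ⟨px, ts, _, r, hm, hM, rfl⟩, by rw [hv, ← h2]; simp⟩

lemma reduces_cancel_suffix {M E W : List (Alph n)} (hE : ∀ s ∈ E, Inert s)
    (h : SRS.Reduces (R1 n x y) (M ++ E) W) :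
    ∃ M', W = M' ++ E ∧ SRS.Reduces (R1 n x y) M M' := by
  induction h with
  | refl => exact ⟨M, rfl, Relation.ReflTransGen.refl⟩
  | tail _ st ih =>
    obtain ⟨M', rfl, hMM'⟩ := ih
    obtain ⟨M'', hstep, rfl⟩ := step_cancel_suffix hE st
    exact ⟨M'', rfl, hMM'.tail hstep⟩

lemma joins_cancel_suffix {M N E : List (Alph n)} (hE : ∀ s ∈ E, Inert s)
    (h : SRS.Joins (R1 n x y) (M ++ E) (N ++ E)) : SRS.Joins (R1 n x y) M N := by
  obtain ⟨W, h1, h2⟩ := h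
  obtain ⟨M', rfl, hM⟩ := reduces_cancel_suffix hE h1
  obtain ⟨N', hNE, hN⟩ := reduces_cancel_suffix hE h2
  obtain rfl : M' = N' := List.append_cancel_right hNE
  exact ⟨M', hM, hN⟩

lemma shuttle {h : Alph n} (hh : IsHash h) :
    ∀ (u : List Bool) (A : List (Alph n)),
      SRS.Reduces (R1 n x y) (A ++ emb u ++ [h]) (A ++ [h] ++ emb u)
  | [], A => by
    simp only [emb, List.map_nil, List.append_nil]
    exact Relation.ReflTransGen.refl
  | s :: u, A => by
    have step1 := shuttle hh u (A ++ [if s then Alph.a else Alph.b])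
    have step2 : SRS.Step (R1 n x y)
        (A ++ [if s then Alph.a else Alph.b, h] ++ emb u)
        (A ++ [h, if s then Alph.a else Alph.b] ++ emb u) :=
      ⟨A, emb u, _, _, rule_mem_hash hh, rfl, rfl⟩
    have e1 : A ++ emb (s :: u) ++ [h]
        = A ++ [if s then Alph.a else Alph.b] ++ emb u ++ [h] := by simp [emb]
    have e2 : A ++ [if s then Alph.a else Alph.b] ++ [h] ++ emb u
        = A ++ [if s then Alph.a else Alph.b, h] ++ emb u := by simp
    have e3 : A ++ [h] ++ emb (s :: u)
        = A ++ [h, if s then Alph.a else Alph.b] ++ emb u := by simp [emb]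
    rw [e1, e3]
    exact Relation.ReflTransGen.tail (e2 ▸ step1) step2

lemma reduces_hash_char {h : Alph n} (hh : IsHash h) {Z W : List (Alph n)}
    (hr : SRS.Reduces (R1 n x y) (Z ++ [h]) W) :
    ∃ A u, W = A ++ [h] ++ emb u ∧ SRS.Reduces (R1 n x y) Z (A ++ emb u) := by
  induction hr with
  | refl =>
    refine ⟨Z, [], by simp [emb], ?_⟩
    simp only [emb, List.map_nil, List.append_nil]
    exact Relation.ReflTransGen.refl
  | tail _ st ih =>
    obtain ⟨A, u, rfl, hZ⟩ := ih
    have st' : SRS.Step (R1 n x y) ((A ++ [h]) ++ emb u) _ := st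
    obtain ⟨M', hstep, rfl⟩ := step_cancel_suffix emb_inert st'
    rcases step_last_inv hstep with ⟨A', hA, rfl⟩ | ⟨X, p, r, hm, rfl, rfl⟩
    · exact ⟨A', u, by simp, hZ.tail (hA.append_right (emb u))⟩
    · obtain ⟨s, rfl, rfl⟩ := R1_snd_hash hh hm
      refine ⟨X, s :: u, by simp [emb], ?_⟩
      have e : X ++ [if s then Alph.a else Alph.b] ++ emb u = X ++ emb (s :: u) := by
        simp [emb]
      exact e ▸ hZ

lemma reduces_c_char {j : Fin (n + 1)} {Z W : List (Alph n)}
    (hr : SRS.Reduces (R1 n x y) (Z ++ [Alph.c j]) W) :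
    (∃ Z', W = Z' ++ [Alph.c j] ∧ SRS.Reduces (R1 n x y) Z Z') ∨
    (∃ X p r, ([p, Alph.c j], r) ∈ R1 n x y ∧
      SRS.Reduces (R1 n x y) Z (X ++ [p]) ∧ SRS.Reduces (R1 n x y) (X ++ r) W) := by
  induction hr with
  | refl => exact Or.inl ⟨Z, rfl, Relation.ReflTransGen.refl⟩
  | tail _ st ih =>
    rcases ih with ⟨Z', rfl, hZ⟩ | ⟨X, p, r, hm, h1, h2⟩
    · rcases step_last_inv st with ⟨Z'', hs, rfl⟩ | ⟨X, p, r, hm, rfl, rfl⟩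
      · exact Or.inl ⟨Z'', rfl, hZ.tail hs⟩
      · exact Or.inr ⟨X, p, r, hm, hZ, Relation.ReflTransGen.refl⟩
    · exact Or.inr ⟨X, p, r, hm, h1, h2.tail st⟩

lemma hash_split_aux {E₁ E₂ : List (Alph n)} {h₁ h₂ : Alph n}
    (hh₁ : IsHash h₁) (hE₂ : ∀ s ∈ E₂, s = Alph.a ∨ s = Alph.b)
    (hs : (h₁ :: E₁) <:+ (h₂ :: E₂)) : h₁ :: E₁ = h₂ :: E₂ := by
  obtain ⟨t, ht⟩ := hs
  cases t with
  | nil => simpa using ht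
  | cons t₀ ts =>
    exfalso
    rw [List.cons_append] at ht
    have hE : E₂ = ts ++ h₁ :: E₁ := by injection ht with _ h'; exact h'.symm
    have hm : h₁ ∈ E₂ := by rw [hE]; simp
    exact not_isHash_of_ab (hE₂ _ hm) hh₁

lemma hash_split {A₁ A₂ E₁ E₂ : List (Alph n)} {h₁ h₂ : Alph n}
    (hh₁ : IsHash h₁) (hh₂ : IsHash h₂)
    (hE₁ : ∀ s ∈ E₁, s = Alph.a ∨ s = Alph.b) (hE₂ : ∀ s ∈ E₂, s = Alph.a ∨ s = Alph.b)
    (heq : A₁ ++ [h₁] ++ E₁ = A₂ ++ [h₂] ++ E₂) :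
    h₁ = h₂ ∧ A₁ = A₂ ∧ E₁ = E₂ := by
  have s₁ : (h₁ :: E₁) <:+ A₂ ++ [h₂] ++ E₂ := ⟨A₁, by rw [← heq]; simp⟩
  have s₂ : (h₂ :: E₂) <:+ A₂ ++ [h₂] ++ E₂ := ⟨A₂, by simp⟩
  have hcons : h₁ :: E₁ = h₂ :: E₂ := by
    rcases List.suffix_or_suffix_of_suffix s₁ s₂ with hs | hs
    · exact hash_split_aux hh₁ hE₂ hs
    · exact (hash_split_aux hh₂ hE₁ hs).symm
  obtain ⟨rfl, rfl⟩ : h₁ = h₂ ∧ E₁ = E₂ := by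
    injection hcons with a b; exact ⟨a, b⟩
  refine ⟨rfl, ?_, rfl⟩
  apply List.append_cancel_right (bs := [h₁] ++ E₁)
  rw [← List.append_assoc, ← List.append_assoc]; exact heq

lemma joins_cancel_hash {h : Alph n} (hh : IsHash h) {Z₁ Z₂ : List (Alph n)}
    (hJ : SRS.Joins (R1 n x y) (Z₁ ++ [h]) (Z₂ ++ [h])) :
    SRS.Joins (R1 n x y) Z₁ Z₂ := by
  obtain ⟨W, h1, h2⟩ := hJ
  obtain ⟨A₁, u₁, rfl, hZ1⟩ := reduces_hash_char hh h1
  obtain ⟨A₂, u₂, heq, hZ2⟩ := reduces_hash_char hh h2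
  obtain ⟨-, hA, hE⟩ := hash_split hh hh emb_ab emb_ab heq.symm
  exact ⟨A₂ ++ emb u₂, hA ▸ hE ▸ hZ1, hZ2⟩

lemma cent_dollar_inert₁ : Inert (n := n) Alph.cent1 := ⟨fun j => by simp, by simp, by simp⟩
lemma cent_dollar_inert₂ : Inert (n := n) Alph.cent2 := ⟨fun j => by simp, by simp, by simp⟩
lemma dollar_inert : Inert (n := n) Alph.dollar := ⟨fun j => by simp, by simp, by simp⟩

lemma single_inert {s : Alph n} (h : Inert s) : ∀ t ∈ [s], Inert t := by
  intro t ht; rw [List.mem_singleton] at ht; rwa [ht]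

/-- Helper for the "fired on one side only" contradiction. -/
lemma fired_not_c {X r W : List (Alph n)} {p : Alph n} {j : Fin (n + 1)}
    (hm : ([p, Alph.c j], r) ∈ R1 n x y)
    (hr : SRS.Reduces (R1 n x y) (X ++ r) W) :
    ∀ Z', W ≠ Z' ++ [Alph.c j] := by
  intro Z' hW
  have : ∃ M t, Inert t ∧ X ++ r = M ++ [t] := by
    rcases R1_snd_c hm with ⟨-, ⟨-, rfl⟩ | ⟨-, rfl⟩⟩ | ⟨-, ⟨-, rfl⟩ | ⟨-, rfl⟩⟩
    · exact ⟨X ++ emb (x j), Alph.cent1, cent_dollar_inert₁, by simp⟩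
    · exact ⟨X ++ emb (y j), Alph.cent2, cent_dollar_inert₂, by simp⟩
    · exact ⟨X ++ ([Alph.hash1] ++ emb (x j)), Alph.dollar, dollar_inert, by simp⟩
    · exact ⟨X ++ ([Alph.hash2] ++ emb (y j)), Alph.dollar, dollar_inert, by simp⟩
  obtain ⟨M, t, hti, hMt⟩ := this
  rw [hMt] at hr
  obtain ⟨M', hW', -⟩ := reduces_cancel_suffix (single_inert hti) hr
  rw [hW] at hW'
  obtain ⟨-, h4⟩ := List.append_inj' hW' rfl
  have : Alph.c j = t := by simpa using h4
  exact hti.1 j this.symm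

lemma joins_of_reduces {u u' v v' : List (Alph n)}
    (hu : SRS.Reduces (R1 n x y) u u') (hv : SRS.Reduces (R1 n x y) v v')
    (h : SRS.Joins (R1 n x y) u' v') : SRS.Joins (R1 n x y) u v := by
  obtain ⟨t, h1, h2⟩ := h
  exact ⟨t, Relation.ReflTransGen.trans hu h1, Relation.ReflTransGen.trans hv h2⟩

/-- Both sides fired an end-domino rule. -/
lemma fired_end {X₁ X₂ W : List (Alph n)} {h₁ h₂ : Alph n} {w₁ w₂ : List Bool}
    (hh₁ : IsHash h₁) (hh₂ : IsHash h₂)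
    (hr₁ : SRS.Reduces (R1 n x y) (X₁ ++ ([h₁] ++ emb w₁ ++ [Alph.dollar])) W)
    (hr₂ : SRS.Reduces (R1 n x y) (X₂ ++ ([h₂] ++ emb w₂ ++ [Alph.dollar])) W) :
    h₁ = h₂ ∧ SRS.Joins (R1 n x y) (X₁ ++ emb w₁) (X₂ ++ emb w₂) := by
  have e₁ : X₁ ++ ([h₁] ++ emb w₁ ++ [Alph.dollar]) = (X₁ ++ [h₁] ++ emb w₁) ++ [Alph.dollar] := by simp
  have e₂ : X₂ ++ ([h₂] ++ emb w₂ ++ [Alph.dollar]) = (X₂ ++ [h₂] ++ emb w₂) ++ [Alph.dollar] := by simp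
  rw [e₁] at hr₁; rw [e₂] at hr₂
  obtain ⟨W₁, rfl, hW₁⟩ := reduces_cancel_suffix (single_inert dollar_inert) hr₁
  obtain ⟨W₂, hW2eq, hW₂⟩ := reduces_cancel_suffix (single_inert dollar_inert) hr₂
  have hWW : W₂ = W₁ := List.append_cancel_right hW2eq.symm
  rw [hWW] at hW₂
  have sh₁ : SRS.Reduces (R1 n x y) ((X₁ ++ emb w₁) ++ [h₁]) W₁ :=
    Relation.ReflTransGen.trans (by simpa [SRS.Reduces] using shuttle hh₁ w₁ X₁) hW₁
  have sh₂ : SRS.Reduces (R1 n x y) ((X₂ ++ emb w₂) ++ [h₂]) W₁ :=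
    Relation.ReflTransGen.trans (by simpa [SRS.Reduces] using shuttle hh₂ w₂ X₂) hW₂
  obtain ⟨A₁, u₁, rfl, hc₁⟩ := reduces_hash_char hh₁ sh₁
  obtain ⟨A₂, u₂, heq, hc₂⟩ := reduces_hash_char hh₂ sh₂
  obtain ⟨hhh, hA, hE⟩ := hash_split hh₁ hh₂ emb_ab emb_ab heq
  exact ⟨hhh, ⟨A₂ ++ emb u₂, hA ▸ hE ▸ hc₁, hc₂⟩⟩

lemma joins_cancel_c {j : Fin (n + 1)} {Z₁ Z₂ : List (Alph n)}
    (hJ : SRS.Joins (R1 n x y) (Z₁ ++ [Alph.c j]) (Z₂ ++ [Alph.c j])) :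
    SRS.Joins (R1 n x y) Z₁ Z₂ := by
  obtain ⟨W, h1, h2⟩ := hJ
  rcases reduces_c_char h1 with ⟨Z₁', rfl, hZ1⟩ | ⟨X₁, p₁, r₁, hm₁, hp₁, hr₁⟩
  · rcases reduces_c_char h2 with ⟨Z₂', heq, hZ2⟩ | ⟨X₂, p₂, r₂, hm₂, hp₂, hr₂⟩
    · obtain rfl : Z₁' = Z₂' := List.append_cancel_right heq
      exact ⟨Z₁', hZ1, hZ2⟩
    · exact absurd rfl (fired_not_c hm₂ hr₂ Z₁')
  · rcases reduces_c_char h2 with ⟨Z₂', rfl, hZ2⟩ | ⟨X₂, p₂, r₂, hm₂, hp₂, hr₂⟩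
    · exact absurd rfl (fired_not_c hm₁ hr₁ Z₂')
    · rcases R1_snd_c hm₁ with ⟨hn₁, hc₁⟩ | ⟨hn₁, hc₁⟩ <;>
        rcases R1_snd_c hm₂ with ⟨hn₂, hc₂⟩ | ⟨hn₂, hc₂⟩
      · -- both intermediate
        rcases hc₁ with ⟨rfl, rfl⟩ | ⟨rfl, rfl⟩ <;> rcases hc₂ with ⟨rfl, rfl⟩ | ⟨rfl, rfl⟩
        · -- same rule cent1
          have hx12 : SRS.Joins (R1 n x y) X₁ X₂ :=
            joins_cancel_suffix (E := emb (x j) ++ [Alph.cent1])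
              (by intro s hs
                  rcases List.mem_append.1 hs with hs | hs
                  · exact emb_inert s hs
                  · rw [List.mem_singleton] at hs; rw [hs]; exact cent_dollar_inert₁)
              ⟨W, by simpa using hr₁, by simpa using hr₂⟩
          exact joins_of_reduces hp₁ hp₂ (hx12.append_right [Alph.cent1])
        · -- cent1 vs cent2 : contradiction on last symbol
          exfalso
          obtain ⟨M₁, rfl, -⟩ := reduces_cancel_suffix (single_inert cent_dollar_inert₁)
            (show SRS.Reduces (R1 n x y) ((X₁ ++ emb (x j)) ++ [Alph.cent1]) W by
              simpa using hr₁)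
          obtain ⟨M₂, hM2, -⟩ := reduces_cancel_suffix (single_inert cent_dollar_inert₂)
            (show SRS.Reduces (R1 n x y) ((X₂ ++ emb (y j)) ++ [Alph.cent2]) (M₁ ++ [Alph.cent1]) by
              simpa using hr₂)
          obtain ⟨-, h4⟩ := List.append_inj' hM2 rfl
          simpa using h4
        · exfalso
          obtain ⟨M₁, rfl, -⟩ := reduces_cancel_suffix (single_inert cent_dollar_inert₂)
            (show SRS.Reduces (R1 n x y) ((X₁ ++ emb (y j)) ++ [Alph.cent2]) W by
              simpa using hr₁)
          obtain ⟨M₂, hM2, -⟩ := reduces_cancel_suffix (single_inert cent_dollar_inert₁)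
            (show SRS.Reduces (R1 n x y) ((X₂ ++ emb (x j)) ++ [Alph.cent1]) (M₁ ++ [Alph.cent2]) by
              simpa using hr₂)
          obtain ⟨-, h4⟩ := List.append_inj' hM2 rfl
          simpa using h4
        · -- same rule cent2
          have hx12 : SRS.Joins (R1 n x y) X₁ X₂ :=
            joins_cancel_suffix (E := emb (y j) ++ [Alph.cent2])
              (by intro s hs
                  rcases List.mem_append.1 hs with hs | hs
                  · exact emb_inert s hs
                  · rw [List.mem_singleton] at hs; rw [hs]; exact cent_dollar_inert₂)
              ⟨W, by simpa using hr₁, by simpa using hr₂⟩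
          exact joins_of_reduces hp₁ hp₂ (hx12.append_right [Alph.cent2])
      · exact absurd hn₁ hn₂
      · exact absurd hn₂ hn₁
      · -- both end rules
        rcases hc₁ with ⟨rfl, rfl⟩ | ⟨rfl, rfl⟩ <;> rcases hc₂ with ⟨rfl, rfl⟩ | ⟨rfl, rfl⟩
        · obtain ⟨-, hjoin⟩ := fired_end (Or.inl rfl) (Or.inl rfl) hr₁ hr₂
          have hx12 : SRS.Joins (R1 n x y) X₁ X₂ := joins_cancel_suffix emb_inert hjoin
          exact joins_of_reduces hp₁ hp₂ (hx12.append_right [Alph.cent1])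
        · obtain ⟨hhh, -⟩ := fired_end (Or.inl rfl) (Or.inr rfl) hr₁ hr₂
          simp at hhh
        · obtain ⟨hhh, -⟩ := fired_end (Or.inr rfl) (Or.inl rfl) hr₁ hr₂
          simp at hhh
        · obtain ⟨-, hjoin⟩ := fired_end (Or.inr rfl) (Or.inr rfl) hr₁ hr₂
          have hx12 : SRS.Joins (R1 n x y) X₁ X₂ := joins_cancel_suffix emb_inert hjoin
          exact joins_of_reduces hp₁ hp₂ (hx12.append_right [Alph.cent2])

end Aux

/-- For every symbol `d ∈ Σ̂` and strings `Z₁, Z₂` over `Σ̂`: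
`Z₁·d ↓_{R₁} Z₂·d` iff `Z₁ ↓_{R₁} Z₂`; in particular, for irreducible `Z₁, Z₂`,
`Z₁·d ↓_{R₁} Z₂·d` implies `Z₁ = Z₂`. -/
theorem R1_cancel_last_symbol (n : ℕ) (x y : Fin (n + 1) → List Bool)
    (hx : ∀ j, x j ≠ []) (hy : ∀ j, y j ≠ [])
    (d : Alph n) (Z₁ Z₂ : List (Alph n)) :
    (SRS.Joins (R1 n x y) (Z₁ ++ [d]) (Z₂ ++ [d]) ↔ SRS.Joins (R1 n x y) Z₁ Z₂)
    ∧ (SRS.Irreducible (R1 n x y) Z₁ → SRS.Irreducible (R1 n x y) Z₂ →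
        SRS.Joins (R1 n x y) (Z₁ ++ [d]) (Z₂ ++ [d]) → Z₁ = Z₂) := by
  have main : SRS.Joins (R1 n x y) (Z₁ ++ [d]) (Z₂ ++ [d]) ↔ SRS.Joins (R1 n x y) Z₁ Z₂ := by
    constructor
    · intro h
      cases d with
      | c j => exact joins_cancel_c h
      | hash1 => exact joins_cancel_hash (Or.inl rfl) h
      | hash2 => exact joins_cancel_hash (Or.inr rfl) h
      | a => exact joins_cancel_suffix (single_inert (inert_of_ab (Or.inl rfl))) h
      | b => exact joins_cancel_suffix (single_inert (inert_of_ab (Or.inr rfl))) h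
      | cent1 => exact joins_cancel_suffix (single_inert cent_dollar_inert₁) h
      | cent2 => exact joins_cancel_suffix (single_inert cent_dollar_inert₂) h
      | dollar => exact joins_cancel_suffix (single_inert dollar_inert) h
    · intro h
      exact h.append_right [d]
  exact ⟨main, fun h1 h2 hJ => SRS.Joins.eq_of_irreducible h1 h2 (main.mp hJ)⟩
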